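/- Let L be a modular lattice, d, e, f ∈ L with d ⊓ (e ⊔ f) ≠ (d ⊓ e) ⊔ (d ⊓ f). Define p = (d ⊓ e) ⊔ (e ⊓ f) ⊔ (f ⊓ d), q = (d ⊔ e) ⊓ (e ⊔ f) ⊓ (f ⊔ d), u = (d ⊓ q) ⊔ p, v = (e ⊓ q) ⊔ p, w = (f ⊓ q) ⊔ p. Then the set {p, q, u, v, w} is a sublattice of L isomorphic to the diamond M3 (i.e., u ⊓ v = v ⊓ w = w ⊓ u = p, u ⊔ v = v ⊔ w = w ⊔ u = q, and all five elements are distinct). -/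
import Mathlib

section DiamondAux

variable {L : Type*} [Lattice L] [IsModularLattice L]

lemma diamond_p_le_q (a b c : L) :
    (a ⊓ b) ⊔ (b ⊓ c) ⊔ (c ⊓ a) ≤ (a ⊔ b) ⊓ (b ⊔ c) ⊓ (c ⊔ a) := by
  refine sup_le (sup_le ?_ ?_) ?_ <;>
  refine le_inf (le_inf ?_ ?_) ?_ <;>
  first
  | exact le_trans inf_le_left le_sup_left
  | exact le_trans inf_le_left le_sup_right
  | exact le_trans inf_le_right le_sup_left
  | exact le_trans inf_le_right le_sup_right

lemma diamond_a_inf_q (a b c : L) :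
    a ⊓ ((a ⊔ b) ⊓ (b ⊔ c) ⊓ (c ⊔ a)) = a ⊓ (b ⊔ c) := by
  refine le_antisymm
    (le_inf inf_le_left (le_trans inf_le_right (le_trans inf_le_left inf_le_right)))
    (le_inf inf_le_left (le_inf (le_inf ?_ inf_le_right) ?_))
  · exact le_trans inf_le_left le_sup_left
  · exact le_trans inf_le_left le_sup_right

lemma diamond_a_sup_p (a b c : L) :
    a ⊔ ((a ⊓ b) ⊔ (b ⊓ c) ⊔ (c ⊓ a)) = a ⊔ (b ⊓ c) := by
  refine le_antisymm (sup_le le_sup_left (sup_le (sup_le ?_ le_sup_right) ?_))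
    (sup_le le_sup_left (le_trans (le_trans le_sup_right le_sup_left) le_sup_right))
  · exact le_trans inf_le_left le_sup_left
  · exact le_trans inf_le_right le_sup_left

/-- `u` in self-dual form -/
lemma diamond_u_eq (a b c : L) :
    (a ⊓ ((a ⊔ b) ⊓ (b ⊔ c) ⊓ (c ⊔ a))) ⊔ ((a ⊓ b) ⊔ (b ⊓ c) ⊔ (c ⊓ a))
      = (a ⊔ (b ⊓ c)) ⊓ ((a ⊔ b) ⊓ (b ⊔ c) ⊓ (c ⊔ a)) := by
  have hpq := diamond_p_le_q a b c
  rw [sup_comm (a ⊓ ((a ⊔ b) ⊓ (b ⊔ c) ⊓ (c ⊔ a))), ← sup_inf_assoc_of_le a hpq,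
    sup_comm ((a ⊓ b) ⊔ (b ⊓ c) ⊔ (c ⊓ a)) a, diamond_a_sup_p a b c]

lemma diamond_inf_lemma (a b c : L) :
    ((a ⊓ ((a ⊔ b) ⊓ (b ⊔ c) ⊓ (c ⊔ a))) ⊔ ((a ⊓ b) ⊔ (b ⊓ c) ⊔ (c ⊓ a)))
    ⊓ ((b ⊓ ((a ⊔ b) ⊓ (b ⊔ c) ⊓ (c ⊔ a))) ⊔ ((a ⊓ b) ⊔ (b ⊓ c) ⊔ (c ⊓ a)))
    = (a ⊓ b) ⊔ (b ⊓ c) ⊔ (c ⊓ a) := by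
  have hub : (b ⊓ ((a ⊔ b) ⊓ (b ⊔ c) ⊓ (c ⊔ a))) ⊔ ((a ⊓ b) ⊔ (b ⊓ c) ⊔ (c ⊓ a))
      = (b ⊔ (c ⊓ a)) ⊓ ((a ⊔ b) ⊓ (b ⊔ c) ⊓ (c ⊔ a)) := by
    have h := diamond_u_eq b c a
    have hp' : (b ⊓ c) ⊔ (c ⊓ a) ⊔ (a ⊓ b) = (a ⊓ b) ⊔ (b ⊓ c) ⊔ (c ⊓ a) := by ac_rfl
    have hq' : (b ⊔ c) ⊓ (c ⊔ a) ⊓ (a ⊔ b) = (a ⊔ b) ⊓ (b ⊔ c) ⊓ (c ⊔ a) := by ac_rfl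
    rw [hp', hq'] at h
    exact h
  rw [diamond_u_eq a b c, hub]
  have key : (a ⊔ (b ⊓ c)) ⊓ (b ⊔ (c ⊓ a)) = (a ⊓ b) ⊔ (b ⊓ c) ⊔ (c ⊓ a) := by
    have h1 : (c ⊓ a) ≤ a ⊔ (b ⊓ c) := le_trans inf_le_right le_sup_left
    rw [← inf_sup_assoc_of_le b h1]
    have h2 : (a ⊔ (b ⊓ c)) ⊓ b = (b ⊓ a) ⊔ (b ⊓ c) := by
      rw [inf_comm, inf_sup_assoc_of_le a (inf_le_left : b ⊓ c ≤ b)]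
    rw [h2]
    ac_rfl
  have hrw : ((a ⊔ (b ⊓ c)) ⊓ ((a ⊔ b) ⊓ (b ⊔ c) ⊓ (c ⊔ a)))
      ⊓ ((b ⊔ (c ⊓ a)) ⊓ ((a ⊔ b) ⊓ (b ⊔ c) ⊓ (c ⊔ a)))
      = ((a ⊔ (b ⊓ c)) ⊓ (b ⊔ (c ⊓ a))) ⊓ (((a ⊔ b) ⊓ (b ⊔ c) ⊓ (c ⊔ a))
        ⊓ ((a ⊔ b) ⊓ (b ⊔ c) ⊓ (c ⊔ a))) := by ac_rfl
  rw [hrw, inf_idem, key, inf_eq_left.mpr (diamond_p_le_q a b c)]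

lemma diamond_sup_lemma (a b c : L) :
    ((a ⊓ ((a ⊔ b) ⊓ (b ⊔ c) ⊓ (c ⊔ a))) ⊔ ((a ⊓ b) ⊔ (b ⊓ c) ⊔ (c ⊓ a)))
    ⊔ ((b ⊓ ((a ⊔ b) ⊓ (b ⊔ c) ⊓ (c ⊔ a))) ⊔ ((a ⊓ b) ⊔ (b ⊓ c) ⊔ (c ⊓ a)))
    = (a ⊔ b) ⊓ (b ⊔ c) ⊓ (c ⊔ a) := by
  have hbq : b ⊓ ((a ⊔ b) ⊓ (b ⊔ c) ⊓ (c ⊔ a)) = b ⊓ (c ⊔ a) := by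
    have h := diamond_a_inf_q b c a
    have hq' : (b ⊔ c) ⊓ (c ⊔ a) ⊓ (a ⊔ b) = (a ⊔ b) ⊓ (b ⊔ c) ⊓ (c ⊔ a) := by ac_rfl
    rw [hq'] at h
    exact h
  rw [diamond_a_inf_q a b c, hbq]
  have hrw : ((a ⊓ (b ⊔ c)) ⊔ ((a ⊓ b) ⊔ (b ⊓ c) ⊔ (c ⊓ a)))
      ⊔ ((b ⊓ (c ⊔ a)) ⊔ ((a ⊓ b) ⊔ (b ⊓ c) ⊔ (c ⊓ a)))
      = ((a ⊓ (b ⊔ c)) ⊔ (b ⊓ (c ⊔ a))) ⊔ (((a ⊓ b) ⊔ (b ⊓ c) ⊔ (c ⊓ a))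
        ⊔ ((a ⊓ b) ⊔ (b ⊓ c) ⊔ (c ⊓ a))) := by ac_rfl
  rw [hrw, sup_idem]
  have habs : (a ⊓ b) ⊔ (b ⊓ c) ⊔ (c ⊓ a) ≤ (a ⊓ (b ⊔ c)) ⊔ (b ⊓ (c ⊔ a)) := by
    refine sup_le (sup_le ?_ ?_) ?_
    · exact le_trans (le_inf inf_le_left (le_trans inf_le_right le_sup_left)) le_sup_left
    · exact le_trans (le_inf inf_le_left (le_trans inf_le_right le_sup_left)) le_sup_right
    · exact le_trans (le_inf inf_le_right (le_trans inf_le_left le_sup_right)) le_sup_left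
  rw [sup_eq_left.mpr habs]
  have h1 : a ⊓ (b ⊔ c) ≤ c ⊔ a := le_trans inf_le_left le_sup_right
  rw [← sup_inf_assoc_of_le b h1]
  have h2 : (a ⊓ (b ⊔ c)) ⊔ b = (b ⊔ a) ⊓ (b ⊔ c) := by
    rw [sup_comm, sup_inf_assoc_of_le a (le_sup_left : b ≤ b ⊔ c)]
  rw [h2]
  ac_rfl

end DiamondAux

theorem diamond_sublattice {L : Type*} [Lattice L] [IsModularLattice L] (d e f : L)
    (h : d ⊓ (e ⊔ f) ≠ (d ⊓ e) ⊔ (d ⊓ f)) :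
    let p := (d ⊓ e) ⊔ (e ⊓ f) ⊔ (f ⊓ d)
    let q := (d ⊔ e) ⊓ (e ⊔ f) ⊓ (f ⊔ d)
    let u := (d ⊓ q) ⊔ p
    let v := (e ⊓ q) ⊔ p
    let w := (f ⊓ q) ⊔ p
    u ⊓ v = p ∧ v ⊓ w = p ∧ w ⊓ u = p ∧
    u ⊔ v = q ∧ v ⊔ w = q ∧ w ⊔ u = q ∧
    (p ≠ q ∧ p ≠ u ∧ p ≠ v ∧ p ≠ w ∧ q ≠ u ∧ q ≠ v ∧ q ≠ w ∧
      u ≠ v ∧ u ≠ w ∧ v ≠ w) := by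
  intro p q u v w
  have hpdef : p = (d ⊓ e) ⊔ (e ⊓ f) ⊔ (f ⊓ d) := rfl
  have hqdef : q = (d ⊔ e) ⊓ (e ⊔ f) ⊓ (f ⊔ d) := rfl
  -- AC-permuted forms of p and q
  have hp2 : (e ⊓ f) ⊔ (f ⊓ d) ⊔ (d ⊓ e) = p := by rw [hpdef]; ac_rfl
  have hq2 : (e ⊔ f) ⊓ (f ⊔ d) ⊓ (d ⊔ e) = q := by rw [hqdef]; ac_rfl
  have hp3 : (f ⊓ d) ⊔ (d ⊓ e) ⊔ (e ⊓ f) = p := by rw [hpdef]; ac_rfl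
  have hq3 : (f ⊔ d) ⊓ (d ⊔ e) ⊓ (e ⊔ f) = q := by rw [hqdef]; ac_rfl
  have huv : u ⊓ v = p := diamond_inf_lemma d e f
  have hvw : v ⊓ w = p := by
    have := diamond_inf_lemma e f d
    rwa [hp2, hq2] at this
  have hwu : w ⊓ u = p := by
    have := diamond_inf_lemma f d e
    rwa [hp3, hq3] at this
  have huv' : u ⊔ v = q := diamond_sup_lemma d e f
  have hvw' : v ⊔ w = q := by
    have := diamond_sup_lemma e f d
    rwa [hp2, hq2] at this
  have hwu' : w ⊔ u = q := by
    have := diamond_sup_lemma f d e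
    rwa [hp3, hq3] at this
  have hpq : p ≤ q := diamond_p_le_q d e f
  have hpu : p ≤ u := le_sup_right
  have hpv : p ≤ v := le_sup_right
  have hpw : p ≤ w := le_sup_right
  have huq : u ≤ q := sup_le (le_trans inf_le_right le_rfl) hpq
  have hvq : v ≤ q := sup_le inf_le_right hpq
  have hwq : w ≤ q := sup_le inf_le_right hpq
  -- p ≠ q, else the triple would be distributive at d
  have hpneq : p ≠ q := by
    intro hpq'
    apply h
    have hdq : d ⊓ q = d ⊓ (e ⊔ f) := diamond_a_inf_q d e f
    have hdp : d ⊓ p = (d ⊓ e) ⊔ (d ⊓ f) := by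
      have hrw : p = (e ⊓ f) ⊔ ((d ⊓ e) ⊔ (f ⊓ d)) := by rw [hpdef]; ac_rfl
      rw [hrw, ← inf_sup_assoc_of_le (e ⊓ f)
        (sup_le inf_le_left inf_le_right : (d ⊓ e) ⊔ (f ⊓ d) ≤ d)]
      have habs : d ⊓ (e ⊓ f) ≤ (d ⊓ e) ⊔ (f ⊓ d) :=
        le_trans (le_inf inf_le_left (le_trans inf_le_right inf_le_left)) le_sup_left
      rw [sup_eq_right.mpr habs]
      ac_rfl
    rw [← hdq, ← hpq', hdp]
  refine ⟨huv, hvw, hwu, huv', hvw', hwu', hpneq, ?_, ?_, ?_, ?_, ?_, ?_, ?_, ?_, ?_⟩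
  · -- p ≠ u
    intro hc
    apply hpneq
    have h1 : q = v := by rw [← huv', ← hc, sup_eq_right.mpr hpv]
    have h2 : p = w := by rw [← hvw, ← h1, inf_eq_right.mpr hwq]
    rw [← hwu', ← h2, ← hc, sup_idem]
  · -- p ≠ v
    intro hc
    apply hpneq
    have h1 : q = u := by rw [← huv', ← hc, sup_eq_left.mpr hpu]
    have h2 : p = w := by rw [← hwu, ← h1, inf_eq_left.mpr hwq]
    rw [← hvw', ← h2, ← hc, sup_idem]
  · -- p ≠ w
    intro hc
    apply hpneq
    have h1 : q = v := by rw [← hvw', ← hc, sup_eq_left.mpr hpv]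
    have h2 : p = u := by rw [← huv, ← h1, inf_eq_left.mpr huq]
    rw [← hwu', ← h2, ← hc, sup_idem]
  · -- q ≠ u
    intro hc
    apply hpneq
    have h1 : p = v := by rw [← huv, ← hc, inf_eq_right.mpr hvq]
    have h2 : q = u := hc
    -- reduce to p = v case
    have h3 : p = w := by rw [← hwu, ← h2, inf_eq_left.mpr hwq]
    rw [← hvw', ← h1, ← h3, sup_idem]
  · -- q ≠ v
    intro hc
    apply hpneq
    have h1 : p = u := by rw [← huv, ← hc, inf_eq_left.mpr huq]
    have h3 : p = w := by rw [← hvw, ← hc, inf_eq_right.mpr hwq]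
    rw [← hwu', ← h1, ← h3, sup_idem]
  · -- q ≠ w
    intro hc
    apply hpneq
    have h1 : p = v := by rw [← hvw, ← hc, inf_eq_left.mpr hvq]
    have h3 : p = u := by rw [← hwu, ← hc, inf_eq_right.mpr huq]
    rw [← huv', ← h1, ← h3, sup_idem]
  · -- u ≠ v
    intro hc
    apply hpneq
    calc p = u ⊓ v := huv.symm
    _ = v := by rw [hc, inf_idem]
    _ = u ⊔ v := by rw [hc, sup_idem]
    _ = q := huv'
  · -- u ≠ w
    intro hc
    apply hpneq
    calc p = w ⊓ u := hwu.symm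
    _ = w := by rw [hc, inf_idem]
    _ = w ⊔ u := by rw [hc, sup_idem]
    _ = q := hwu'
  · -- v ≠ w
    intro hc
    apply hpneq
    calc p = v ⊓ w := hvw.symm
    _ = w := by rw [hc, inf_idem]
    _ = v ⊔ w := by rw [hc, sup_idem]
    _ = q := hvw'
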